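/- Let p/q be an irreducible fraction with 0 < p/q < 1/2. Then the reduced degree sequence of the Haros graph G_{p/q} contains exactly p entries equal to 2, exactly q − 2p entries equal to 3, and no entry equal to 4; equivalently P(2,p/q) = p/q, P(3,p/q) = 1 − 2p/q and P(4,p/q) = 0. -/

import Mathlib

/-- Symbols for paths in the Farey binary tree. -/
inductive LR
  | L
  | R
deriving DecidableEq

/-- One step in the Farey binary tree: update the current pair of fractions
(represented as pairs (numerator, denominator) of naturals). -/
def fareyStep : ((ℕ × ℕ) × (ℕ × ℕ)) → LR → ((ℕ × ℕ) × (ℕ × ℕ))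
  | ((a, b), (c, d)), LR.L => ((a, b), (a + c, b + d))
  | ((a, b), (c, d)), LR.R => ((a + c, b + d), (c, d))

/-- The final pair of fractions of a word: after reading the first symbol `L`
the current pair is (0/1, 1/1); the remaining symbols update it. -/
def finalPair (w : List LR) : (ℕ × ℕ) × (ℕ × ℕ) :=
  w.tail.foldl fareyStep ((0, 1), (1, 1))

/-- The value ⟨w⟩ of a word: the mediant of its final pair, as (numerator, denominator). -/
def value (w : List LR) : ℕ × ℕ :=
  ((finalPair w).1.1 + (finalPair w).2.1, (finalPair w).1.2 + (finalPair w).2.2)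

/-- A word over {L,R} is a Farey word when its first symbol is `L`. -/
def IsFareyWord (w : List LR) : Prop := w.head? = some LR.L

/-- Concatenation of degree sequences:
[a₁,…,a_s] ⊕ [b₁,…,b_t] = [a₁+1, a₂, …, a_{s−1}, a_s+b₁, b₂, …, b_{t−1}, b_t+1]. -/
def oplus (A B : List ℕ) : List ℕ :=
  (A.dropLast.modifyHead (· + 1)) ++ [A.getLastD 0 + B.headD 0] ++ B.tail.dropLast
    ++ [B.getLastD 0 + 1]

/-- Update of the pair (D(left ancestor), D(right ancestor)) of unreduced degree
sequences along one symbol. -/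
def degStep : (List ℕ × List ℕ) → LR → (List ℕ × List ℕ)
  | (A, B), LR.L => (A, oplus A B)
  | (A, B), LR.R => (oplus A B, B)

/-- The pair (D(a/b), D(c/d)) of unreduced degree sequences of the final pair of a word;
0/1 and 1/1 are both assigned the list [1,1]. -/
def degPair (w : List LR) : List ℕ × List ℕ :=
  w.tail.foldl degStep ([1, 1], [1, 1])

/-- The unreduced degree sequence D(⟨w⟩) = D(a/b) ⊕ D(c/d) of the value of a word. -/
def Dseq (w : List LR) : List ℕ :=
  oplus (degPair w).1 (degPair w).2

/-- Reduction: [k₁,…,k_{q+1}] becomes [k₂,…,k_q, k₁+k_{q+1}]; the last entry is the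
boundary degree and the remaining ones are the inner degrees. -/
def reduce (D : List ℕ) : List ℕ :=
  D.tail.dropLast ++ [D.headD 0 + D.getLastD 0]

/-- The reduced degree sequence of the Haros graph G_{⟨w⟩}. -/
def degSeq (w : List LR) : List ℕ := reduce (Dseq w)

/-- Degree-distribution entropy S of the Haros graph G_{⟨w⟩}:
S = −Σ_k P(k)·ln P(k), summed over the degree values occurring in the reduced
degree sequence, where P(k) = m(k)/q. -/
noncomputable def Sent (w : List LR) : ℝ :=
  -∑ k ∈ (degSeq w).toFinset,
    (((degSeq w).count k : ℝ) / ((value w).2 : ℝ)) *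
      Real.log (((degSeq w).count k : ℝ) / ((value w).2 : ℝ))

/-- Reduced entropy H of the Haros graph G_{⟨w⟩} (with the convention 0·ln 0 = 0,
automatic since Real.log 0 = 0). -/
noncomputable def Hent (w : List LR) : ℝ :=
  let x : ℝ := ((value w).1 : ℝ) / ((value w).2 : ℝ)
  if x ≤ 1 / 2 then
    Sent w + 2 * x * Real.log x + (1 - 2 * x) * Real.log (1 - 2 * x)
  else
    Sent w + 2 * (1 - x) * Real.log (1 - x) + (2 * x - 1) * Real.log (2 * x - 1)

/-! ### Auxiliary machinery for statement0 -/

/-- Right-component invariant: `X = h :: (M ++ [l])` with heads/lasts ≥ 2 and the middle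
entries counting 2s equal to `p`, 3s equal to `q - 2p`, and no 4s. -/
def GoodB (p q : ℕ) (X : List ℕ) : Prop :=
  ∃ h M l, X = h :: (M ++ [l]) ∧ 2 ≤ h ∧ 2 ≤ l ∧
    M.count 2 = p ∧ q = 2 * p + M.count 3 ∧ M.count 4 = 0

/-- Left-component invariant: either the initial `[1,1]` (for 0/1), or as in `GoodB`
but with last entry ≥ 3. -/
def GoodA (p q : ℕ) (X : List ℕ) : Prop :=
  (X = [1, 1] ∧ p = 0 ∧ q = 1) ∨
  ∃ h M l, X = h :: (M ++ [l]) ∧ 2 ≤ h ∧ 3 ≤ l ∧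
    M.count 2 = p ∧ q = 2 * p + M.count 3 ∧ M.count 4 = 0

/-- Combined invariant tying the pair of fractions to the pair of degree sequences. -/
def HGInv (st : (ℕ × ℕ) × (ℕ × ℕ)) (ds : List ℕ × List ℕ) : Prop :=
  GoodA st.1.1 st.1.2 ds.1 ∧ GoodB st.2.1 st.2.2 ds.2 ∧
    (ds.1 = [1, 1] → ds.2.headD 0 = 2)

lemma oplus_eq (hA : ℕ) (MA : List ℕ) (lA hB : ℕ) (MB : List ℕ) (lB : ℕ) :
    oplus (hA :: (MA ++ [lA])) (hB :: (MB ++ [lB])) =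
      (hA + 1) :: ((MA ++ (lA + hB) :: MB) ++ [lB + 1]) := by
  unfold oplus
  have h1 : (hA :: (MA ++ [lA])).dropLast = hA :: MA := by
    rw [show hA :: (MA ++ [lA]) = (hA :: MA) ++ [lA] by simp, List.dropLast_concat]
  have h2 : (hA :: (MA ++ [lA])).getLastD 0 = lA := by
    rw [show hA :: (MA ++ [lA]) = (hA :: MA) ++ [lA] by simp]
    exact List.getLastD_concat
  have h3 : (hB :: (MB ++ [lB])).getLastD 0 = lB := by
    rw [show hB :: (MB ++ [lB]) = (hB :: MB) ++ [lB] by simp]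
    exact List.getLastD_concat
  rw [h1, h2, h3]
  simp [List.dropLast_concat]

lemma reduce_eq (h : ℕ) (M : List ℕ) (l : ℕ) :
    reduce (h :: (M ++ [l])) = M ++ [h + l] := by
  unfold reduce
  have h2 : (h :: (M ++ [l])).getLastD 0 = l := by
    rw [show h :: (M ++ [l]) = (h :: M) ++ [l] by simp]
    exact List.getLastD_concat
  rw [h2]
  simp [List.dropLast_concat]

lemma key {a b c d : ℕ} {A B : List ℕ} (hA : GoodA a b A) (hB : GoodB c d B)
    (hside : A = [1, 1] → B.headD 0 = 2) :
    ∃ h M l, oplus A B = h :: (M ++ [l]) ∧ 2 ≤ h ∧ 3 ≤ l ∧ 5 ≤ h + l ∧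
      (A = [1, 1] → h = 2) ∧
      M.count 2 = a + c ∧ b + d = 2 * (a + c) + M.count 3 ∧ M.count 4 = 0 := by
  obtain ⟨hB', MB, lB, rfl, h2B, h2lB, hc2B, hc3B, hc4B⟩ := hB
  rcases hA with ⟨rfl, rfl, rfl⟩ | ⟨hA', MA, lA, rfl, h2A, h3A, hc2A, hc3A, hc4A⟩
  · -- A = [1,1]
    have hhB : hB' = 2 := by simpa using hside rfl
    subst hhB
    refine ⟨2, 3 :: MB, lB + 1, ?_, by omega, by omega, by omega, fun _ => rfl, ?_, ?_, ?_⟩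
    · have := oplus_eq 1 [] 1 2 MB lB
      simpa using this
    · simp [List.count_cons, hc2B]
    · simp only [List.count_cons]
      have h32 : ((3 : ℕ) == 3) = true := by decide
      simp [hc2B, hc3B]
      omega
    · simp only [List.count_cons]
      simp [hc4B]
  · -- general A
    have h5 : 5 ≤ lA + hB' := by omega
    refine ⟨hA' + 1, MA ++ (lA + hB') :: MB, lB + 1,
      oplus_eq hA' MA lA hB' MB lB, by omega, by omega, by omega, ?_, ?_, ?_, ?_⟩
    · intro hcontra
      have : hA' + 0 = 1 := by
        have := hcontra
        simp only [List.cons.injEq] at this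
        omega
      omega
    · have : (lA + hB') ≠ 2 := by omega
      simp [List.count_append, List.count_cons, this, hc2A, hc2B]
    · have : (lA + hB') ≠ 3 := by omega
      simp [List.count_append, List.count_cons, this, hc2A, hc2B, hc3A, hc3B]
      omega
    · have : (lA + hB') ≠ 4 := by omega
      simp [List.count_append, List.count_cons, this, hc4A, hc4B]

lemma hginv_step (st : (ℕ × ℕ) × (ℕ × ℕ)) (ds : List ℕ × List ℕ) (s : LR)
    (h : HGInv st ds) : HGInv (fareyStep st s) (degStep ds s) := by
  obtain ⟨⟨a, b⟩, ⟨c, d⟩⟩ := st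
  obtain ⟨A, B⟩ := ds
  obtain ⟨hA, hB, hside⟩ := h
  obtain ⟨h', M, l, heq, h2, h3, h5, hh2, hc2, hc3, hc4⟩ := key hA hB hside
  cases s with
  | L =>
    refine ⟨hA, ⟨h', M, l, heq, ?_, by omega, hc2, hc3, hc4⟩, ?_⟩
    · rcases hA with ⟨h11, _⟩ | ⟨_, _, _, _, hh, _⟩
      · have := hh2 h11; omega
      · omega
    · intro h11
      simp only [degStep] at h11 ⊢
      rw [heq]
      simp [hh2 h11]
  | R =>
    refine ⟨Or.inr ⟨h', M, l, heq, ?_, h3, hc2, hc3, hc4⟩, hB, ?_⟩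
    · rcases hA with ⟨h11, _⟩ | ⟨_, _, _, _, hh, _⟩
      · have := hh2 h11; omega
      · omega
    · intro hcontra
      simp only [degStep] at hcontra
      rw [heq] at hcontra
      simp only [List.cons.injEq] at hcontra
      have : h' = 1 := hcontra.1
      omega

lemma hginv_fold (u : List LR) : ∀ st ds, HGInv st ds →
    HGInv (u.foldl fareyStep st) (u.foldl degStep ds) := by
  induction u with
  | nil => intro st ds h; exact h
  | cons s u ih => intro st ds h; exact ih _ _ (hginv_step st ds s h)

lemma half_fold (u : List LR) : ∀ a b c d : ℕ, b ≤ 2 * a → d ≤ 2 * c →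
    (u.foldl fareyStep ((a, b), (c, d))).1.2 ≤ 2 * (u.foldl fareyStep ((a, b), (c, d))).1.1 ∧
    (u.foldl fareyStep ((a, b), (c, d))).2.2 ≤ 2 * (u.foldl fareyStep ((a, b), (c, d))).2.1 := by
  induction u with
  | nil => intro a b c d h1 h2; exact ⟨h1, h2⟩
  | cons s u ih =>
    intro a b c d h1 h2
    cases s with
    | L => exact ih a b (a + c) (b + d) h1 (by omega)
    | R => exact ih (a + c) (b + d) c d (by omega) h2

/-- for an irreducible fraction p/q with 0 < p/q < 1/2, the reduced degree
sequence of the Haros graph G_{p/q} has exactly p entries equal to 2, exactly q − 2p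
entries equal to 3, and no entry equal to 4. -/
theorem statement0 (p q : ℕ) (hcop : Nat.Coprime p q) (hp : 0 < p) (hq : 2 * p < q)
    (w : List LR) (hw : IsFareyWord w) (hval : value w = (p, q)) :
    (degSeq w).count 2 = p ∧ (degSeq w).count 3 = q - 2 * p ∧ (degSeq w).count 4 = 0 := by
  -- w = L :: rest
  obtain ⟨s, rest, rfl⟩ : ∃ s rest, w = s :: rest := by
    cases w with
    | nil => simp [IsFareyWord] at hw
    | cons s rest => exact ⟨s, rest, rfl⟩
  have hs : s = LR.L := by simpa [IsFareyWord] using hw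
  subst hs
  cases rest with
  | nil =>
    -- value = (1,2), contradicts 2p < q
    have : (1, 2) = (p, q) := by simpa [value, finalPair] using hval
    simp only [Prod.mk.injEq] at this
    omega
  | cons s2 u =>
    cases s2 with
    | R =>
      -- value ≥ 1/2, contradiction
      have hfp : finalPair (LR.L :: LR.R :: u) = u.foldl fareyStep ((1, 2), (1, 1)) := by
        simp [finalPair, List.foldl, fareyStep]
      have := half_fold u 1 2 1 1 (by omega) (by omega)
      have hv : value (LR.L :: LR.R :: u) =
          ((u.foldl fareyStep ((1, 2), (1, 1))).1.1 + (u.foldl fareyStep ((1, 2), (1, 1))).2.1,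
           (u.foldl fareyStep ((1, 2), (1, 1))).1.2 + (u.foldl fareyStep ((1, 2), (1, 1))).2.2) := by
        simp [value, hfp]
      rw [hval] at hv
      simp only [Prod.mk.injEq] at hv
      omega
    | L =>
      -- main case
      have hfp : finalPair (LR.L :: LR.L :: u) = u.foldl fareyStep ((0, 1), (1, 2)) := by
        simp [finalPair, List.foldl, fareyStep]
      have hdp : degPair (LR.L :: LR.L :: u) = u.foldl degStep ([1, 1], [2, 2, 2]) := by
        have h1 : degStep ([1, 1], [1, 1]) LR.L = ([1, 1], [2, 2, 2]) := by
          simp [degStep]; rfl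
        simp [degPair, List.foldl, h1]
      have hinv0 : HGInv ((0, 1), (1, 2)) ([1, 1], [2, 2, 2]) := by
        refine ⟨Or.inl ⟨rfl, rfl, rfl⟩, ⟨2, [2], 2, rfl, by omega, by omega, ?_, ?_, ?_⟩, ?_⟩
        · rfl
        · rfl
        · rfl
        · intro _; rfl
      have hinv := hginv_fold u _ _ hinv0
      set st := u.foldl fareyStep ((0, 1), (1, 2)) with hstdef
      set ds := u.foldl degStep ([1, 1], [2, 2, 2]) with hdsdef
      obtain ⟨hA, hB, hside⟩ := hinv
      obtain ⟨h', M, l, heq, h2, h3, h5, _, hc2, hc3, hc4⟩ := key hA hB hside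
      have hval' : st.1.1 + st.2.1 = p ∧ st.1.2 + st.2.2 = q := by
        have : value (LR.L :: LR.L :: u) = (st.1.1 + st.2.1, st.1.2 + st.2.2) := by
          simp [value, hfp, hstdef]
        rw [hval] at this
        simp only [Prod.mk.injEq] at this
        exact ⟨this.1.symm, this.2.symm⟩
      have hds : degSeq (LR.L :: LR.L :: u) = M ++ [h' + l] := by
        unfold degSeq Dseq
        rw [hdp, heq, reduce_eq]
      rw [hds]
      have hne2 : h' + l ≠ 2 := by omega
      have hne3 : h' + l ≠ 3 := by omega
      have hne4 : h' + l ≠ 4 := by omega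
      refine ⟨?_, ?_, ?_⟩
      · simp [List.count_append, List.count_singleton', hne2, hc2, hval'.1]
      · simp only [List.count_append]
        have : ([h' + l] : List ℕ).count 3 = 0 := by
          simp [List.count_singleton', hne3]
        rw [this]
        omega
      · simp only [List.count_append]
        have : ([h' + l] : List ℕ).count 4 = 0 := by
          simp [List.count_singleton', hne4]
        rw [this, hc4]
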